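/- arXiv:1605.08656 — 2 statements merged into one kernel-verified Lean document; each statement's English description precedes it below -/
import Mathlib

section
/- Twistor lift identity for slice functions: let f : Ω_D → ℍ be a slice function. For every u in the real span of {1, i} in ℍ, the element I = (1 + u·j)⁻¹·i·(1 + u·j) belongs to 𝕊, and for every α + iβ ∈ D with β > 0 one has the quaternionic identity (1 + u·j)·f(α + Iβ) = f(α + iβ) + u·j·f(α − iβ), where α + iβ and α − iβ are viewed as quaternions in Ω_D (with imaginary units i and −i respectively). -/
/-- The quaternion imaginary unit `i`. -/
noncomputable def qi : Quaternion ℝ := ⟨0, 1, 0, 0⟩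

/-- The quaternion imaginary unit `j`. -/
noncomputable def qj : Quaternion ℝ := ⟨0, 0, 1, 0⟩

@[simp] lemma qi_re : qi.re = 0 := rfl
@[simp] lemma qi_imI : qi.imI = 1 := rfl
@[simp] lemma qi_imJ : qi.imJ = 0 := rfl
@[simp] lemma qi_imK : qi.imK = 0 := rfl
@[simp] lemma qj_re : qj.re = 0 := rfl
@[simp] lemma qj_imI : qj.imI = 0 := rfl
@[simp] lemma qj_imJ : qj.imJ = 1 := rfl
@[simp] lemma qj_imK : qj.imK = 0 := rfl

/- Identify ℍ with `Quaternion ℝ`.  A slice function on the circularization of a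
conjugation-symmetric set `D ⊆ ℂ` is induced by a stem function `(F₁, F₂)` via
`f (α + Iβ) = F₁ (α + iβ) + I * F₂ (α + iβ)`. -/

/-- **Twistor lift identity for slice functions**: for every `u` in the real span
of `{1, i}` the element `I = (1 + u·j)⁻¹·i·(1 + u·j)` lies in `𝕊`, and for
`α + iβ ∈ D` with `β > 0` one has
`(1 + u·j)·f(α + Iβ) = f(α + iβ) + u·j·f(α - iβ)`. -/
theorem twistor_lift_identity
    (D : Set ℂ) (hne : D.Nonempty)
    (hDsymm : ∀ z ∈ D, (starRingEnd ℂ) z ∈ D)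
    (F₁ F₂ : ℂ → Quaternion ℝ)
    (hstem : ∀ z ∈ D,
      F₁ ((starRingEnd ℂ) z) = F₁ z ∧ F₂ ((starRingEnd ℂ) z) = - F₂ z)
    (f : Quaternion ℝ → Quaternion ℝ)
    (hslice : ∀ z ∈ D, ∀ I : Quaternion ℝ, I ^ 2 = -1 →
      f ((z.re : Quaternion ℝ) + I * (z.im : Quaternion ℝ)) = F₁ z + I * F₂ z)
    (u : Quaternion ℝ) (hu : u ∈ Submodule.span ℝ ({1, qi} : Set (Quaternion ℝ))) :
    ((1 + u * qj)⁻¹ * qi * (1 + u * qj)) ^ 2 = -1 ∧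
    ∀ z ∈ D, 0 < z.im →
      (1 + u * qj) *
          f ((z.re : Quaternion ℝ)
              + ((1 + u * qj)⁻¹ * qi * (1 + u * qj)) * (z.im : Quaternion ℝ))
        = f ((z.re : Quaternion ℝ) + qi * (z.im : Quaternion ℝ))
          + u * qj * f ((z.re : Quaternion ℝ) - qi * (z.im : Quaternion ℝ)) := by
  obtain ⟨a, b, hab⟩ := Submodule.mem_span_pair.mp hu
  subst hab
  have hqi2 : qi * qi = -1 := by
    ext <;> simp [Quaternion.re_one, Quaternion.imI_one, Quaternion.imJ_one, Quaternion.imK_one] <;> norm_num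
  have hqi2' : qi ^ 2 = -1 := by rw [sq]; exact hqi2
  have hq0 : (1 + (a • 1 + b • qi) * qj) ≠ 0 := by
    intro h
    have := congrArg QuaternionAlgebra.re h
    simp [Quaternion.re_one, Quaternion.imI_one, Quaternion.imJ_one, Quaternion.imK_one, Quaternion.re_zero] at this
  have hinv := mul_inv_cancel₀ hq0
  have hinv' := inv_mul_cancel₀ hq0
  set q : Quaternion ℝ := 1 + (a • 1 + b • qi) * qj with hqdef
  have hsq : (q⁻¹ * qi * q) ^ 2 = -1 := by
    rw [pow_two]
    have e : (q⁻¹ * qi * q) * (q⁻¹ * qi * q) = q⁻¹ * (qi * qi) * q := by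
      rw [mul_assoc (q⁻¹ * qi) q, ← mul_assoc q (q⁻¹ * qi) q, ← mul_assoc q q⁻¹ qi,
        hinv, one_mul, mul_assoc q⁻¹ qi, ← mul_assoc qi qi, ← mul_assoc]
    rw [e, hqi2, mul_neg_one, neg_mul, hinv']
  refine ⟨hsq, ?_⟩
  intro z hz hzim
  have e1 := hslice z hz _ hsq
  have e2 := hslice z hz qi hqi2'
  have hz' := hDsymm z hz
  have e3 := hslice _ hz' qi hqi2'
  obtain ⟨hF1, hF2⟩ := hstem z hz
  simp only [Complex.conj_re, Complex.conj_im, hF1, hF2, Quaternion.coe_neg, mul_neg,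
    ← sub_eq_add_neg] at e3
  rw [e1, e2, e3]
  have hmid : q * (q⁻¹ * qi * q) = qi * q := by
    rw [← mul_assoc, ← mul_assoc, hinv, one_mul]
  rw [mul_add, ← mul_assoc, hmid]
  rw [hqdef]
  ext <;> simp [Quaternion.re_one, Quaternion.imI_one, Quaternion.imJ_one, Quaternion.imK_one] <;> ring
end

section
/- Image of the slice regular function f(x) = x·(1 − I_x·i)/2: define f on nonreal quaternions by f(α + Iβ) = (α + Iβ)·(1 − I·i)/2 for α, β ∈ ℝ with β > 0 and I ∈ 𝕊. Then for I = a·i + b·j + c·k ∈ 𝕊 (so a² + b² + c² = 1) one has the explicit formula 2·f(α + Iβ) = α(a+1) + β(a+1)·i + (βb − αc)·j + (αb + βc)·k. Moreover, the image of the set {α + Iβ : α ∈ ℝ, β > 0, I ∈ 𝕊, I ≠ −i} under f equals {q = q₀ + q₁i + q₂j + q₃k ∈ ℍ : q₁ > 0}. -/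
/-- The quaternion imaginary unit `k`. -/
noncomputable def qk : Quaternion ℝ := ⟨0, 0, 0, 1⟩

lemma unit_sq (a b c : ℝ) (h : a^2+b^2+c^2=1) :
    ((a • qi + b • qj + c • qk : Quaternion ℝ))^2 = -1 := by
  ext <;> simp [pow_two, Quaternion.ext_iff, Quaternion.re_one, Quaternion.imI_one, Quaternion.imJ_one, Quaternion.imK_one] <;> simp [qi, qj, qk] <;> nlinarith [h]

lemma formula (α β a b c : ℝ) (h : a^2+b^2+c^2=1) :
    ((α:Quaternion ℝ) + (a • qi + b • qj + c • qk)*(β:Quaternion ℝ)) * (1 - (a • qi + b • qj + c • qk)*qi)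
    = ⟨α*(a+1), β*(a+1), β*b - α*c, α*b + β*c⟩ := by
  ext <;> simp [Quaternion.ext_iff, Quaternion.re_one, Quaternion.imI_one, Quaternion.imJ_one, Quaternion.imK_one] <;> simp [qi, qj, qk] <;>
    first
      | linear_combination β*h
      | linear_combination α*h
      | linear_combination (-α)*h
      | linear_combination (-β)*h
      | ring
lemma two_halfq (w : Quaternion ℝ) : 2 * ((2:ℝ)⁻¹ • w) = w := by
  rw [show (2 : Quaternion ℝ) = ((2:ℝ) : Quaternion ℝ) by exact_mod_cast rfl,
    Quaternion.coe_mul_eq_smul, smul_smul]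
  norm_num

lemma sq_decomp (I : Quaternion ℝ) (h : I^2 = -1) :
    I.re = 0 ∧ I.imI^2+I.imJ^2+I.imK^2 = 1 := by
  rw [pow_two, Quaternion.ext_iff] at h
  simp [Quaternion.re_one, Quaternion.imI_one, Quaternion.imJ_one, Quaternion.imK_one] at h
  obtain ⟨h1, h2, h3, h4⟩ := h
  have hre : I.re = 0 := by
    by_contra hr
    have ha : I.imI = 0 := by
      have : I.re * I.imI = 0 := by linarith
      rcases mul_eq_zero.mp this with h | h; exact absurd h hr; exact h
    have hb : I.imJ = 0 := by
      have : I.re * I.imJ = 0 := by nlinarith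
      rcases mul_eq_zero.mp this with h | h; exact absurd h hr; exact h
    have hc : I.imK = 0 := by
      have : I.re * I.imK = 0 := by nlinarith
      rcases mul_eq_zero.mp this with h | h; exact absurd h hr; exact h
    nlinarith [sq_nonneg I.re]
  exact ⟨hre, by nlinarith⟩

/- Identify ℍ with `Quaternion ℝ`, components `q = q₀ + q₁i + q₂j + q₃k`.
Every nonreal quaternion is `α + Iβ` with `β > 0`, `I² = -1`. -/

/-- **Image of the slice regular function `f(x) = x(1 - Iₓ·i)/2`**: with
`I = a·i + b·j + c·k ∈ 𝕊` one has
`2f(α + Iβ) = α(a+1) + β(a+1)i + (βb - αc)j + (αb + βc)k`, and the image of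
`{α + Iβ : β > 0, I ∈ 𝕊, I ≠ -i}` under `f` is `{q : q₁ > 0}`. -/
theorem image_of_basic_slice_regular_function
    (f : Quaternion ℝ → Quaternion ℝ)
    (hf : ∀ (α β : ℝ), 0 < β → ∀ I : Quaternion ℝ, I ^ 2 = -1 →
      f ((α : Quaternion ℝ) + I * (β : Quaternion ℝ))
        = (2 : ℝ)⁻¹ • (((α : Quaternion ℝ) + I * (β : Quaternion ℝ))
            * (1 - I * qi))) :
    (∀ (α β : ℝ), 0 < β → ∀ a b c : ℝ, a ^ 2 + b ^ 2 + c ^ 2 = 1 →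
      2 * f ((α : Quaternion ℝ)
          + ((a : ℝ) • qi + (b : ℝ) • qj + (c : ℝ) • qk) * (β : Quaternion ℝ))
        = (⟨α * (a + 1), β * (a + 1), β * b - α * c, α * b + β * c⟩ : Quaternion ℝ))
    ∧
    f '' {x : Quaternion ℝ | ∃ (α β : ℝ) (I : Quaternion ℝ),
        0 < β ∧ I ^ 2 = -1 ∧ I ≠ -qi ∧ x = (α : Quaternion ℝ) + I * (β : Quaternion ℝ)}
      = {q : Quaternion ℝ | 0 < q.imI} := by
  have key : ∀ (α β : ℝ), 0 < β → ∀ a b c : ℝ, a ^ 2 + b ^ 2 + c ^ 2 = 1 →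
      f ((α : Quaternion ℝ) + ((a : ℝ) • qi + (b : ℝ) • qj + (c : ℝ) • qk) * (β : Quaternion ℝ))
        = (2:ℝ)⁻¹ • (⟨α * (a + 1), β * (a + 1), β * b - α * c, α * b + β * c⟩ : Quaternion ℝ) := by
    intro α β hβ a b c habc
    rw [hf α β hβ _ (unit_sq a b c habc), formula α β a b c habc]
    rfl
  constructor
  · intro α β hβ a b c habc
    rw [key α β hβ a b c habc]; exact two_halfq _
  · ext q
    simp only [Set.mem_image, Set.mem_setOf_eq]
    constructor
    · rintro ⟨x, ⟨α, β, I, hβ, hI2, hIne, rfl⟩, rfl⟩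
      obtain ⟨hre, habc⟩ := sq_decomp I hI2
      have hIeq : I = I.imI • qi + I.imJ • qj + I.imK • qk := by
        ext <;> simp [hre] <;> simp [qi, qj, qk]
      rw [hIeq, key α β hβ _ _ _ habc]
      have ha1 : -1 ≤ I.imI := by nlinarith [sq_nonneg I.imJ, sq_nonneg I.imK]
      have ha1' : I.imI ≠ -1 := by
        intro h
        apply hIne
        have hb : I.imJ = 0 := by nlinarith [sq_nonneg I.imK]
        have hc : I.imK = 0 := by nlinarith [sq_nonneg I.imJ]
        ext <;> simp [hre, h, hb, hc] <;> simp [qi]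
      have : (0:ℝ) < I.imI + 1 := by
        rcases lt_or_eq_of_le ha1 with h | h
        · linarith
        · exact absurd h.symm ha1'
      show (0:ℝ) < (2:ℝ)⁻¹ * (β * (I.imI + 1))
      positivity
    · intro hq
      set q0 := q.re with hq0
      set q1 := q.imI with hq1
      set q2 := q.imJ with hq2
      set q3 := q.imK with hq3
      have hN0 : (0:ℝ) < q0^2 + q1^2 := by positivity
      have hN : (0:ℝ) < q0^2 + q1^2 + q2^2 + q3^2 := by positivity
      set N0 := q0^2 + q1^2 with hN0def
      set N := q0^2 + q1^2 + q2^2 + q3^2 with hNdef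
      refine ⟨(q0*N/N0 : ℝ) + (((2*N0-N)/N : ℝ) • qi + (2*(q1*q2+q0*q3)/N : ℝ) • qj
          + (2*(q1*q3-q0*q2)/N : ℝ) • qk) * (q1*N/N0 : ℝ),
        ⟨q0*N/N0, q1*N/N0, _, ?_, ?_, ?_, rfl⟩, ?_⟩
      · have : (0:ℝ) < q1 * N := by positivity
        positivity
      · apply unit_sq
        field_simp
        ring
      · intro h
        have h' := congrArg QuaternionAlgebra.imI h
        simp at h'
        simp [qi, qj, qk] at h'
        have hpos : (0:ℝ) < 2*N0/N := by positivity
        have h2 : (2*N0-N)/N + 1 = 2*N0/N := by field_simp; ring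
        linarith
      · have habc : ((2*N0-N)/N)^2 + (2*(q1*q2+q0*q3)/N)^2 + (2*(q1*q3-q0*q2)/N)^2 = 1 := by
          field_simp
          ring
        have hβ : (0:ℝ) < q1*N/N0 := by
          have : (0:ℝ) < q1 * N := by positivity
          positivity
        rw [key _ _ hβ _ _ _ habc]
        ext <;> simp <;> field_simp <;> ring
end
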